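/- There is no probability measure μ on {−1, +1}³ reproducing the quantum singlet joint probabilities for coplanar directions at angles θ₁ = 0, θ₂ = π/3, θ₃ = 2π/3; that is, no probability measure μ on {−1,+1}³ satisfies μ{s : sᵢ = +1 and sⱼ = −1} = (1/2)·sin²((θᵢ − θⱼ)/2) simultaneously for the pairs (i,j) = (1,2), (2,3), (1,3). Indeed (1/2)sin²(π/3) = 3/8 exceeds (1/2)sin²(π/6) + (1/2)sin²(π/6) = 1/4, violating Wigner's inequality. -/

import Mathlib

open MeasureTheory Real

noncomputable section

/-- The three coplanar measurement directions `θ₁ = 0`, `θ₂ = π/3`, `θ₃ = 2π/3`. -/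
def angles : Fin 3 → ℝ := ![0, π / 3, 2 * π / 3]

/-- No probability measure on `{-1,+1}³` reproduces the quantum singlet joint
probabilities `μ{sᵢ = +1, sⱼ = -1} = (1/2) sin²((θᵢ - θⱼ)/2)` for the coplanar
directions `θ₁ = 0, θ₂ = π/3, θ₃ = 2π/3` simultaneously for pairs
`(1,2), (2,3), (1,3)`. -/
theorem no_measure_reproduces_quantum
    (μ : Measure (Fin 3 → ({-1, 1} : Set ℤ))) (hμ : IsProbabilityMeasure μ) :
    ¬ (μ {s | (s 0 : ℤ) = 1 ∧ (s 1 : ℤ) = -1}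
         = ENNReal.ofReal ((1 / 2) * Real.sin ((angles 0 - angles 1) / 2) ^ 2) ∧
       μ {s | (s 1 : ℤ) = 1 ∧ (s 2 : ℤ) = -1}
         = ENNReal.ofReal ((1 / 2) * Real.sin ((angles 1 - angles 2) / 2) ^ 2) ∧
       μ {s | (s 0 : ℤ) = 1 ∧ (s 2 : ℤ) = -1}
         = ENNReal.ofReal ((1 / 2) * Real.sin ((angles 0 - angles 2) / 2) ^ 2)) := by
  rintro ⟨h12, h23, h13⟩
  have hsub : {s : Fin 3 → ({-1, 1} : Set ℤ) | (s 0 : ℤ) = 1 ∧ (s 2 : ℤ) = -1} ⊆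
      {s | (s 0 : ℤ) = 1 ∧ (s 1 : ℤ) = -1} ∪ {s | (s 1 : ℤ) = 1 ∧ (s 2 : ℤ) = -1} := by
    rintro s ⟨h0, h2⟩
    rcases (s 1).2 with h1 | h1
    · exact Or.inl ⟨h0, h1⟩
    · exact Or.inr ⟨h1, h2⟩
  have hle := (measure_mono (μ := μ) hsub).trans (measure_union_le _ _)
  rw [h12, h23, h13] at hle
  have e1 : Real.sin ((angles 0 - angles 1) / 2) ^ 2 = 1 / 4 := by
    simp only [angles, Matrix.cons_val_zero, Matrix.cons_val_one, Matrix.head_cons]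
    have : (0 - π / 3) / 2 = -(π / 6) := by ring
    rw [this, Real.sin_neg, Real.sin_pi_div_six]
    norm_num
  have e2 : Real.sin ((angles 1 - angles 2) / 2) ^ 2 = 1 / 4 := by
    simp only [angles, Matrix.cons_val_one, Matrix.head_cons, Matrix.cons_val_two, Matrix.tail_cons, Matrix.cons_val_zero]
    have : (π / 3 - 2 * π / 3) / 2 = -(π / 6) := by ring
    rw [this, Real.sin_neg, Real.sin_pi_div_six]
    norm_num
  have e3 : Real.sin ((angles 0 - angles 2) / 2) ^ 2 = 3 / 4 := by
    simp only [angles, Matrix.cons_val_zero, Matrix.cons_val_two, Matrix.tail_cons, Matrix.head_cons]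
    have : (0 - 2 * π / 3) / 2 = -(π / 3) := by ring
    rw [this, Real.sin_neg, Real.sin_pi_div_three]
    rw [neg_sq]
    rw [div_pow, Real.sq_sqrt (by norm_num : (3:ℝ) ≥ 0)]
    norm_num
  rw [e1, e2, e3] at hle
  rw [← ENNReal.ofReal_add (by norm_num) (by norm_num)] at hle
  have := (ENNReal.ofReal_le_ofReal_iff (by norm_num)).mp hle
  norm_num at this
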